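/- Let Λ and Λ' be Bedford–McMullen carpets defined on the same m×n grid, both with non-uniform vertical fibres, with parameters (M₀, Ñ_1 > ⋯ > Ñ_{M₀}, R_1,…,R_{M₀}) and (M₀', Ñ'_1 > ⋯ > Ñ'_{M₀'}, R'_1,…,R'_{M₀'}) respectively, and rate functions I and I' respectively. Let t̲ and t̄ be the quantities associated to Λ. Then I(t) = I'(t − γ·log(M'/M)) for every t ∈ (t̲, t̄) if and only if M₀ = M₀' and, for every î ∈ {1,…,M₀}, Ñ_î/Ñ'_î = (R'_î/R_î)^γ = (M'/M)^γ. -/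

import Mathlib

open Filter Set MeasureTheory
open scoped ENNReal NNReal Topology

noncomputable section

/-- The data defining a Bedford–McMullen carpet: an `m × n` grid with `n > m ≥ 2` and a
nonempty set `A` of selected rectangles, with more than one nonempty column. -/
structure BMData where
  m : ℕ
  n : ℕ
  two_le_m : 2 ≤ m
  m_lt_n : m < n
  A : Finset (Fin m × Fin n)
  A_nonempty : A.Nonempty
  one_lt_cols : 1 < (A.image Prod.fst).card

namespace BMData

variable (C : BMData)

/-- The affine contraction `f_{(i,j)}` associated to a selected rectangle `(i, j) ∈ A`
(with the grid indexed from `0` rather than from `1`). -/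
def map (p : Fin C.m × Fin C.n) (x : ℝ × ℝ) : ℝ × ℝ :=
  (x.1 / C.m + (p.1 : ℝ) / C.m, x.2 / C.n + (p.2 : ℝ) / C.n)

/-- `Λ` is the attractor of the iterated function system: the unique nonempty compact set
satisfying `Λ = ⋃_{p ∈ A} f_p(Λ)`. -/
def IsAttractor (Λ : Set (ℝ × ℝ)) : Prop :=
  Λ.Nonempty ∧ IsCompact Λ ∧ Λ = ⋃ p ∈ C.A, C.map p '' Λ

/-- The (finite set of) nonempty columns. -/
def cols : Finset (Fin C.m) := C.A.image Prod.fst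

/-- `M`, the number of nonempty columns. -/
def M : ℕ := C.cols.card

/-- `N`, the total number of maps. -/
def N : ℕ := C.A.card

/-- The number `N_î` of maps in column `î`. -/
def colCount (i : Fin C.m) : ℕ := (C.A.filter fun p => p.1 = i).card

/-- Non-uniform vertical fibres: the column counts are not all equal. -/
def NonUniform : Prop :=
  ∃ i ∈ C.cols, ∃ j ∈ C.cols, C.colCount i ≠ C.colCount j

/-- `γ = log n / log m`. -/
def gamma : ℝ := Real.log C.n / Real.log C.m

/-- `t̲ = (1/M) ∑_ĵ log N_ĵ`. -/
def tLow : ℝ := (1 / (C.M : ℝ)) * ∑ j ∈ C.cols, Real.log (C.colCount j)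

/-- `t̄ = ∑_ĵ (N_ĵ/N) log N_ĵ`. -/
def tUp : ℝ := ∑ j ∈ C.cols, ((C.colCount j : ℝ) / (C.N : ℝ)) * Real.log (C.colCount j)

/-- The large deviations rate function
`I(t) = sup_λ (λt − log((1/M) ∑_ĵ N_ĵ^λ))`. -/
def rate (t : ℝ) : ℝ :=
  ⨆ l : ℝ, (l * t - Real.log ((1 / (C.M : ℝ)) * ∑ j ∈ C.cols, (C.colCount j : ℝ) ^ l))

/-- The map `T_s(t) = (s − log M/log m)·log n + γ·I(t)`. -/
def T (s t : ℝ) : ℝ :=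
  (s - Real.log C.M / Real.log C.m) * Real.log C.n + C.gamma * C.rate t

/-- The sequence `t_ℓ(s)`, shifted so that `t_L(s) = tseq s (L - 1)`:
`tseq s 0 = t_1(s) = (s − log M/log m)·log n` and `tseq s (k+1) = T_s (tseq s k)`. -/
def tseq (s : ℝ) : ℕ → ℝ
  | 0 => (s - Real.log C.M / Real.log C.m) * Real.log C.n
  | k + 1 => C.T s (tseq s k)

/-- The Hausdorff dimension of the carpet (Bedford–McMullen formula). -/
def dimH : ℝ :=
  (1 / Real.log C.m) *
    Real.log (∑ j ∈ C.cols, (C.colCount j : ℝ) ^ (Real.log C.m / Real.log C.n))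

/-- The box dimension of the carpet (Bedford–McMullen formula). -/
def dimB : ℝ :=
  Real.log C.N / Real.log C.n + (1 - Real.log C.m / Real.log C.n) * (Real.log C.M / Real.log C.m)

/-- `(M₀, Ñ_1 > ⋯ > Ñ_{M₀}, R_1, …, R_{M₀})` are the parameters of the carpet: `Ñ` lists the
distinct values among the column counts in strictly decreasing order, and `R î` is the number
of nonempty columns whose count equals `Ñ î`. -/
def HasParams (M0 : ℕ) (Nt R : Fin M0 → ℕ) : Prop :=
  (∀ i j : Fin M0, i < j → Nt j < Nt i) ∧
  (∀ i : Fin M0, 0 < R i) ∧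
  (∀ c ∈ C.cols, ∃ i : Fin M0, C.colCount c = Nt i) ∧
  (∀ i : Fin M0, R i = (C.cols.filter fun c => C.colCount c = Nt i).card)

/-- `ψ_{ī|k}(s) = M^{kγ}·n^{−sk}·∏_{ℓ=1}^k N_{i_ℓ}` for a word `ī` of length `J` over the
alphabet of nonempty columns. -/
def psi (s : ℝ) {J : ℕ} (w : Fin J → {c // c ∈ C.cols}) (k : ℕ) : ℝ :=
  (C.M : ℝ) ^ ((k : ℝ) * C.gamma) * (C.n : ℝ) ^ (-(s * (k : ℝ))) *
    ∏ l ∈ Finset.univ.filter (fun l : Fin J => (l : ℕ) < k), (C.colCount (w l).1 : ℝ)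

/-- `Ψ_J(s) = ∑_{ī} min_{0 ≤ k ≤ J} ψ_{ī|k}(s)`. -/
def Psi (J : ℕ) (s : ℝ) : ℝ :=
  ∑ w : Fin J → {c // c ∈ C.cols}, ⨅ k : Fin (J + 1), C.psi s w (k : ℕ)

open Classical in
/-- `∑_{ī : ψ_{ī|J}(s) ≤ 1} ψ_{ī|J}(s)`. -/
def psiSumLe (s : ℝ) (J : ℕ) : ℝ :=
  ∑ w : Fin J → {c // c ∈ C.cols}, if C.psi s w J ≤ 1 then C.psi s w J else 0

/-- `H(Q*_t)`: the maximal entropy of a probability vector `q` on the nonempty columns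
subject to `∑_ĵ q_ĵ log N_ĵ = t`. -/
def entMax (t : ℝ) : ℝ :=
  sSup { h : ℝ | ∃ q : Fin C.m → ℝ, (∀ j, 0 ≤ q j) ∧ (∀ j ∉ C.cols, q j = 0) ∧
    (∑ j ∈ C.cols, q j) = 1 ∧ (∑ j ∈ C.cols, q j * Real.log (C.colCount j)) = t ∧
    h = -∑ j ∈ C.cols, q j * Real.log (q j) }

/-- A probability vector on the nonempty columns. -/
def IsProbVec (p : Fin C.m → ℝ) : Prop :=
  (∀ j, 0 ≤ p j) ∧ (∀ j ∉ C.cols, p j = 0) ∧ (∑ j ∈ C.cols, p j) = 1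

/-- `∑_ĵ p_ĵ log N_ĵ`. -/
def colAvg (p : Fin C.m → ℝ) : ℝ := ∑ j ∈ C.cols, p j * Real.log (C.colCount j)

/-- The relative entropy `H(p‖P)` where `P = (N_1/N, …, N_M/N)`. -/
def relEntP (p : Fin C.m → ℝ) : ℝ :=
  ∑ j ∈ C.cols, p j * Real.log (p j / ((C.colCount j : ℝ) / (C.N : ℝ)))

/-- The relative entropy `H(p‖Q)` where `Q = (1/M, …, 1/M)`. -/
def relEntQ (p : Fin C.m → ℝ) : ℝ :=
  ∑ j ∈ C.cols, p j * Real.log (p j / (1 / (C.M : ℝ)))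

/-- The function `β(ξ)` of the multifractal spectrum of the uniform self-affine measure. -/
def beta (ξ : ℝ) : ℝ :=
  (1 / Real.log C.m) * (-(ξ * Real.log C.N) +
    Real.log (∑ j ∈ C.cols, (C.colCount j : ℝ) ^ (C.gamma⁻¹ + (1 - C.gamma⁻¹) * ξ)))

/-- `f(α) = inf_ξ (αξ + β(ξ))`. -/
def fspec (α : ℝ) : ℝ := ⨅ ξ : ℝ, (α * ξ + C.beta ξ)

end BMData

/-- The lower `θ`-intermediate dimension of a set in a metric space. -/
def lowerInterDim {X : Type*} [MetricSpace X] (θ : ℝ) (F : Set X) : ℝ :=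
  sInf { s : ℝ | 0 ≤ s ∧ ∀ ε > 0, ∀ δ₀ > 0, ∃ δ : ℝ, 0 < δ ∧ δ ≤ δ₀ ∧
    ∃ 𝒰 : Set (Set X), 𝒰.Countable ∧ F ⊆ ⋃₀ 𝒰 ∧
      (∀ U ∈ 𝒰, δ ^ (1 / θ) ≤ Metric.diam U ∧ Metric.diam U ≤ δ) ∧
      (∑' U : 𝒰, ENNReal.ofReal (Metric.diam (U : Set X) ^ s)) ≤ ENNReal.ofReal ε }

/-- The upper `θ`-intermediate dimension of a set in a metric space. -/
def upperInterDim {X : Type*} [MetricSpace X] (θ : ℝ) (F : Set X) : ℝ :=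
  sInf { s : ℝ | 0 ≤ s ∧ ∀ ε > 0, ∃ δ₀ > 0, ∀ δ : ℝ, 0 < δ → δ ≤ δ₀ →
    ∃ 𝒰 : Set (Set X), 𝒰.Countable ∧ F ⊆ ⋃₀ 𝒰 ∧
      (∀ U ∈ 𝒰, δ ^ (1 / θ) ≤ Metric.diam U ∧ Metric.diam U ≤ δ) ∧
      (∑' U : 𝒰, ENNReal.ofReal (Metric.diam (U : Set X) ^ s)) ≤ ENNReal.ofReal ε }

/-- The topological support of a Borel measure: the set of points all of whose
neighbourhoods have positive measure. -/
def measSupport {X : Type*} [MetricSpace X] [MeasurableSpace X] (μ : Measure X) : Set X :=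
  { x | ∀ r : ℝ, 0 < r → 0 < μ (Metric.ball x r) }

/-- `S^s_{δ,θ}(F)`: the infimal `s`-cost of a countable cover of `F` by sets of diameter
between `δ^{1/θ}` and `δ`. -/
def interCost {X : Type*} [MetricSpace X] (F : Set X) (θ s δ : ℝ) : ℝ≥0∞ :=
  sInf { c : ℝ≥0∞ | ∃ 𝒰 : Set (Set X), 𝒰.Countable ∧ F ⊆ ⋃₀ 𝒰 ∧
    (∀ U ∈ 𝒰, δ ^ (1 / θ) ≤ Metric.diam U ∧ Metric.diam U ≤ δ) ∧
    c = ∑' U : 𝒰, ENNReal.ofReal (Metric.diam (U : Set X) ^ s) }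



/-! ### Auxiliary machinery for statement8 -/

section Statement8Aux

set_option linter.unusedSectionVars false
set_option linter.unusedVariables false
set_option maxHeartbeats 1000000

namespace BMAux
variable {ι : Type*} [DecidableEq ι] (s : Finset ι) (ℓ : ι → ℝ)

def S (b : ℝ) : ℝ := ∑ j ∈ s, Real.exp (b * ℓ j)
def S1 (b : ℝ) : ℝ := ∑ j ∈ s, ℓ j * Real.exp (b * ℓ j)
def S2 (b : ℝ) : ℝ := ∑ j ∈ s, ℓ j ^ 2 * Real.exp (b * ℓ j)
def D (b : ℝ) : ℝ := S1 s ℓ b / S s ℓ b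
def L (b : ℝ) : ℝ := Real.log ((1 / (s.card : ℝ)) * S s ℓ b)

variable {s}

theorem S_pos (hs : s.Nonempty) (b : ℝ) : 0 < S s ℓ b :=
  Finset.sum_pos (fun j _ => Real.exp_pos _) hs

theorem hasDerivAt_S (b : ℝ) : HasDerivAt (S s ℓ) (S1 s ℓ b) b := by
  have : ∀ j ∈ s, HasDerivAt (fun x : ℝ => Real.exp (x * ℓ j)) (ℓ j * Real.exp (b * ℓ j)) b := by
    intro j _
    have h := (hasDerivAt_mul_const (ℓ j) (x := b)).exp
    simpa [mul_comm] using h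
  exact HasDerivAt.fun_sum this

theorem hasDerivAt_S1 (b : ℝ) : HasDerivAt (S1 s ℓ) (S2 s ℓ b) b := by
  have : ∀ j ∈ s, HasDerivAt (fun x : ℝ => ℓ j * Real.exp (x * ℓ j))
      (ℓ j ^ 2 * Real.exp (b * ℓ j)) b := by
    intro j _
    have h := ((hasDerivAt_mul_const (ℓ j) (x := b)).exp).const_mul (ℓ j)
    refine h.congr_deriv ?_
    ring
  exact HasDerivAt.fun_sum this

theorem var_identity (b : ℝ) :
    2 * (S2 s ℓ b * S s ℓ b - S1 s ℓ b ^ 2) =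
      ∑ p ∈ s ×ˢ s, (ℓ p.1 - ℓ p.2) ^ 2 * (Real.exp (b * ℓ p.1) * Real.exp (b * ℓ p.2)) := by
  rw [Finset.sum_product]
  have h : ∀ i ∈ s, ∑ j ∈ s, (ℓ i - ℓ j) ^ 2 * (Real.exp (b * ℓ i) * Real.exp (b * ℓ j))
      = ℓ i ^ 2 * Real.exp (b * ℓ i) * S s ℓ b
        - 2 * ((ℓ i * Real.exp (b * ℓ i)) * S1 s ℓ b)
        + Real.exp (b * ℓ i) * S2 s ℓ b := by
    intro i _
    have : ∀ j ∈ s, (ℓ i - ℓ j) ^ 2 * (Real.exp (b * ℓ i) * Real.exp (b * ℓ j))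
        = (ℓ i ^ 2 * Real.exp (b * ℓ i)) * Real.exp (b * ℓ j)
          - 2 * ((ℓ i * Real.exp (b * ℓ i)) * (ℓ j * Real.exp (b * ℓ j)))
          + Real.exp (b * ℓ i) * (ℓ j ^ 2 * Real.exp (b * ℓ j)) := fun j _ => by ring
    rw [Finset.sum_congr rfl this, Finset.sum_add_distrib, Finset.sum_sub_distrib,
      ← Finset.mul_sum, ← Finset.mul_sum, ← Finset.mul_sum, ← Finset.mul_sum]
    rfl
  rw [Finset.sum_congr rfl h, Finset.sum_add_distrib, Finset.sum_sub_distrib,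
    ← Finset.sum_mul, ← Finset.mul_sum, ← Finset.sum_mul, ← Finset.sum_mul]
  show 2 * (S2 s ℓ b * S s ℓ b - S1 s ℓ b ^ 2)
      = S2 s ℓ b * S s ℓ b - 2 * (S1 s ℓ b * S1 s ℓ b) + S s ℓ b * S2 s ℓ b
  ring

theorem var_pos (hne : ∃ i ∈ s, ∃ j ∈ s, ℓ i ≠ ℓ j) (b : ℝ) :
    0 < S2 s ℓ b * S s ℓ b - S1 s ℓ b ^ 2 := by
  obtain ⟨i, hi, j, hj, hij⟩ := hne
  have h2 : 0 < ∑ p ∈ s ×ˢ s, (ℓ p.1 - ℓ p.2) ^ 2 * (Real.exp (b * ℓ p.1) * Real.exp (b * ℓ p.2)) := by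
    refine Finset.sum_pos' (fun p _ => by positivity) ⟨(i, j), Finset.mem_product.mpr ⟨hi, hj⟩, ?_⟩
    have : ℓ i - ℓ j ≠ 0 := sub_ne_zero.mpr hij
    positivity
  have := var_identity ℓ (s := s) b
  linarith

section
variable (hs : s.Nonempty) (hne : ∃ i ∈ s, ∃ j ∈ s, ℓ i ≠ ℓ j)
include hs

theorem hasDerivAt_D (b : ℝ) :
    HasDerivAt (D s ℓ)
      ((S2 s ℓ b * S s ℓ b - S1 s ℓ b * S1 s ℓ b) / S s ℓ b ^ 2) b :=
  (hasDerivAt_S1 ℓ b).div (hasDerivAt_S ℓ b) (S_pos ℓ hs b).ne'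

theorem continuous_D : Continuous (D s ℓ) :=
  continuous_iff_continuousAt.mpr fun x => (hasDerivAt_D ℓ hs x).differentiableAt.continuousAt

include hne in
theorem strictMono_D : StrictMono (D s ℓ) := by
  apply strictMono_of_deriv_pos
  intro b
  rw [(hasDerivAt_D ℓ hs b).deriv]
  have h1 := var_pos ℓ hne b
  have h2 : (0:ℝ) < S s ℓ b ^ 2 := pow_pos (S_pos ℓ hs b) 2
  apply div_pos _ h2
  nlinarith

theorem LS_pos (b : ℝ) : 0 < (1 / (s.card : ℝ)) * S s ℓ b := by
  have h1 := S_pos ℓ hs b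
  have h2 : (0:ℝ) < (s.card : ℝ) := by exact_mod_cast Finset.card_pos.mpr hs
  positivity

theorem hasDerivAt_L (b : ℝ) : HasDerivAt (L s ℓ) (D s ℓ b) b := by
  have h := (((hasDerivAt_S ℓ b)).const_mul (1 / (s.card : ℝ))).log (LS_pos ℓ hs b).ne'
  have hcard : (0:ℝ) < (s.card : ℝ) := by exact_mod_cast Finset.card_pos.mpr hs
  have hc : (1 / (s.card : ℝ)) ≠ 0 := by positivity
  refine h.congr_deriv ?_
  rw [D]
  rw [mul_comm ((1:ℝ) / (s.card:ℝ)) (S1 s ℓ b), mul_comm ((1:ℝ) / (s.card:ℝ)) (S s ℓ b),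
    mul_div_mul_right _ _ hc]
end

theorem L_zero (hs : s.Nonempty) : L s ℓ 0 = 0 := by
  have : S s ℓ 0 = (s.card : ℝ) := by
    simp [S]
  have hcard : (0:ℝ) < (s.card : ℝ) := by exact_mod_cast Finset.card_pos.mpr hs
  rw [L, this, one_div, inv_mul_cancel₀ hcard.ne', Real.log_one]

section
variable (hs : s.Nonempty) (hne : ∃ i ∈ s, ∃ j ∈ s, ℓ i ≠ ℓ j)
include hs hne

theorem tangent {lam0 t : ℝ} (hD : D s ℓ lam0 = t) (lam : ℝ) :
    lam * t - L s ℓ lam ≤ lam0 * t - L s ℓ lam0 := by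
  set f : ℝ → ℝ := fun x => L s ℓ x - x * t with hf
  have hder : ∀ x, HasDerivAt f (D s ℓ x - t) x := fun x =>
    (hasDerivAt_L ℓ hs x).sub (hasDerivAt_mul_const t)
  have hdiff : Differentiable ℝ f := fun x => (hder x).differentiableAt
  have key : f lam0 ≤ f lam := by
    rcases le_total lam0 lam with h | h
    · have mono : MonotoneOn f (Ici lam0) := by
        apply monotoneOn_of_deriv_nonneg (convex_Ici lam0) hdiff.continuous.continuousOn
          (hdiff.differentiableOn)
        intro x hx
        rw [interior_Ici] at hx
        rw [(hder x).deriv, ← hD, sub_nonneg]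
        exact ((strictMono_D ℓ hs hne).le_iff_le).mpr (le_of_lt hx)
      exact mono self_mem_Ici h h
    · have anti : AntitoneOn f (Iic lam0) := by
        apply antitoneOn_of_deriv_nonpos (convex_Iic lam0) hdiff.continuous.continuousOn
          (hdiff.differentiableOn)
        intro x hx
        rw [interior_Iic] at hx
        rw [(hder x).deriv, ← hD, sub_nonpos]
        exact ((strictMono_D ℓ hs hne).le_iff_le).mpr (le_of_lt hx)
      exact anti h self_mem_Iic h
  simp only [hf] at key
  linarith

theorem bddAbove_rate {lam0 t : ℝ} (hD : D s ℓ lam0 = t) :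
    BddAbove (range fun lam => lam * t - L s ℓ lam) := by
  refine ⟨lam0 * t - L s ℓ lam0, ?_⟩
  rintro x ⟨lam, rfl⟩
  exact tangent ℓ hs hne hD lam

theorem isup_eq {lam0 t : ℝ} (hD : D s ℓ lam0 = t) :
    (⨆ lam : ℝ, lam * t - L s ℓ lam) = lam0 * t - L s ℓ lam0 := by
  apply le_antisymm (ciSup_le (tangent ℓ hs hne hD))
  exact le_ciSup (bddAbove_rate ℓ hs hne hD) lam0

theorem L_lt {lam0 : ℝ} (h0 : 0 < lam0) : L s ℓ lam0 < lam0 * D s ℓ lam0 := by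
  obtain ⟨ξ, hξ, hslope⟩ := exists_hasDerivAt_eq_slope (L s ℓ) (D s ℓ) h0
    ((fun x _ => (hasDerivAt_L ℓ hs x).differentiableAt.continuousAt.continuousWithinAt))
    (fun x _ => hasDerivAt_L ℓ hs x)
  rw [L_zero ℓ hs, sub_zero, sub_zero] at hslope
  have hlt : D s ℓ ξ < D s ℓ lam0 := (strictMono_D ℓ hs hne) hξ.2
  rw [hslope] at hlt
  have := (div_lt_iff₀ h0).mp hlt
  linarith
end

theorem sup'_neg' (hs : s.Nonempty) (f : ι → ℝ) :
    s.sup' hs (fun i => -f i) = - s.inf' hs f := by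
  apply le_antisymm
  · exact Finset.sup'_le hs _ fun b hb => neg_le_neg (Finset.inf'_le f hb)
  · rw [neg_le]
    exact Finset.le_inf' hs _ fun b hb => by
      rw [neg_le]; exact Finset.le_sup' (fun i => -f i) hb

/-- Key asymptotic: for any `t` below the max of `ℓ`, some `b` has `D b > t`. -/
theorem exists_D_gt (hs : s.Nonempty) {t : ℝ} (ht : t < s.sup' hs ℓ) :
    ∃ b : ℝ, t < D s ℓ b := by
  set Lm := s.sup' hs ℓ with hLm
  -- the error sum tends to 0
  have htend : Tendsto (fun b => ∑ j ∈ s, (Lm - ℓ j) * Real.exp (b * (ℓ j - Lm)))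
      atTop (𝓝 0) := by
    have h0 : (0:ℝ) = ∑ j ∈ s, (0:ℝ) := by simp
    rw [h0]
    apply tendsto_finset_sum
    intro j hj
    rcases eq_or_lt_of_le (Finset.le_sup' ℓ hj : ℓ j ≤ Lm) with heq | hlt
    · have hzero : Lm - ℓ j = 0 := by rw [heq, sub_self]
      rw [hzero]
      simp only [zero_mul]
      exact tendsto_const_nhds
    · have h1 : Tendsto (fun b : ℝ => b * (ℓ j - Lm)) atTop atBot :=
        Tendsto.atTop_mul_const_of_neg (by linarith) tendsto_id
      have h2 : Tendsto (fun b : ℝ => Real.exp (b * (ℓ j - Lm))) atTop (𝓝 0) :=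
        Real.tendsto_exp_atBot.comp h1
      simpa using h2.const_mul (Lm - ℓ j)
  have hev := htend.eventually_lt_const (by linarith : (0:ℝ) < Lm - t)
  obtain ⟨b, hb⟩ := hev.exists
  refine ⟨b, ?_⟩
  -- show S1 b - t * S b > 0
  obtain ⟨j0, hj0, hj0eq⟩ := Finset.exists_mem_eq_sup' hs ℓ
  have hSlb : Real.exp (b * Lm) ≤ S s ℓ b := by
    have h5 : Real.exp (b * ℓ j0) ≤ S s ℓ b := by
      rw [S]
      exact Finset.single_le_sum (f := fun j => Real.exp (b * ℓ j))
        (fun j _ => (Real.exp_pos _).le) hj0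
    rwa [← hj0eq, ← hLm] at h5
  have hkey : S1 s ℓ b - t * S s ℓ b > 0 := by
    have hid : S1 s ℓ b - t * S s ℓ b
        = (Lm - t) * S s ℓ b
          - (∑ j ∈ s, (Lm - ℓ j) * Real.exp (b * (ℓ j - Lm))) * Real.exp (b * Lm) := by
      rw [S1, S, Finset.mul_sum, Finset.mul_sum, Finset.sum_mul, ← Finset.sum_sub_distrib,
        ← Finset.sum_sub_distrib]
      refine Finset.sum_congr rfl fun j hj => ?_
      have : Real.exp (b * (ℓ j - Lm)) * Real.exp (b * Lm) = Real.exp (b * ℓ j) := by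
        rw [← Real.exp_add]; ring_nf
      rw [mul_assoc, this]; ring
    have hpos : (Lm - t) * S s ℓ b
        - (∑ j ∈ s, (Lm - ℓ j) * Real.exp (b * (ℓ j - Lm))) * Real.exp (b * Lm)
        > 0 := by
      have h3 : (∑ j ∈ s, (Lm - ℓ j) * Real.exp (b * (ℓ j - Lm))) * Real.exp (b * Lm)
          < (Lm - t) * Real.exp (b * Lm) :=
        mul_lt_mul_of_pos_right hb (Real.exp_pos _)
      have h4 : (Lm - t) * Real.exp (b * Lm) ≤ (Lm - t) * S s ℓ b :=
        mul_le_mul_of_nonneg_left hSlb (by linarith)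
      linarith
    linarith [hid ▸ hpos]
  rw [D, lt_div_iff₀ (S_pos ℓ hs b)]
  linarith

theorem S_neg (b : ℝ) : S s (fun j => -ℓ j) b = S s ℓ (-b) := by
  refine Finset.sum_congr rfl fun j _ => by ring_nf

theorem S1_neg (b : ℝ) : S1 s (fun j => -ℓ j) b = - S1 s ℓ (-b) := by
  rw [S1, S1, ← Finset.sum_neg_distrib]
  refine Finset.sum_congr rfl fun j _ => by ring_nf

theorem D_neg (b : ℝ) : D s (fun j => -ℓ j) b = - D s ℓ (-b) := by
  rw [D, D, S_neg, S1_neg, neg_div]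

theorem exists_D_lt (hs : s.Nonempty) {t : ℝ} (ht : s.inf' hs ℓ < t) :
    ∃ b : ℝ, D s ℓ b < t := by
  have h := exists_D_gt (ℓ := fun j => -ℓ j) hs (t := -t) ?_
  · obtain ⟨b, hb⟩ := h
    rw [D_neg] at hb
    exact ⟨-b, by linarith⟩
  · rw [sup'_neg' hs ℓ]
    linarith

/-- If `t` exceeds the max of `ℓ`, the Legendre expression is unbounded above. -/
theorem not_bddAbove (hs : s.Nonempty) {t : ℝ} (ht : s.sup' hs ℓ < t) :
    ¬ BddAbove (range fun lam => lam * t - L s ℓ lam) := by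
  set Lm := s.sup' hs ℓ with hLm
  have hcard : (0:ℝ) < (s.card : ℝ) := by exact_mod_cast Finset.card_pos.mpr hs
  have hbound : ∀ lam : ℝ, 0 ≤ lam → L s ℓ lam ≤ lam * Lm := by
    intro lam hlam
    have hS : S s ℓ lam ≤ (s.card : ℝ) * Real.exp (lam * Lm) := by
      rw [S]
      have hstep : ∀ j ∈ s, Real.exp (lam * ℓ j) ≤ Real.exp (lam * Lm) := by
        intro j hj
        exact Real.exp_le_exp.mpr (mul_le_mul_of_nonneg_left (Finset.le_sup' ℓ hj) hlam)
      calc ∑ j ∈ s, Real.exp (lam * ℓ j) ≤ ∑ _j ∈ s, Real.exp (lam * Lm) :=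
            Finset.sum_le_sum hstep
        _ = (s.card : ℝ) * Real.exp (lam * Lm) := by rw [Finset.sum_const, nsmul_eq_mul]
    have harg : (1 / (s.card : ℝ)) * S s ℓ lam ≤ Real.exp (lam * Lm) := by
      rw [div_mul_eq_mul_div, one_mul, div_le_iff₀ hcard]
      linarith [hS]
    have hLpos : 0 < (1 / (s.card : ℝ)) * S s ℓ lam := by
      have := S_pos ℓ hs lam
      positivity
    calc L s ℓ lam ≤ Real.log (Real.exp (lam * Lm)) := Real.log_le_log hLpos harg
      _ = lam * Lm := Real.log_exp _
  rintro ⟨K, hK⟩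
  have hKb : ∀ lam : ℝ, lam * t - L s ℓ lam ≤ K := fun lam => hK (mem_range_self lam)
  have hpos : 0 < t - Lm := by linarith
  set lam0 : ℝ := max 0 ((K + 1) / (t - Lm)) with hlam0
  have h0 : 0 ≤ lam0 := le_max_left _ _
  have h1 : (K + 1) / (t - Lm) ≤ lam0 := le_max_right _ _
  have h2 : K + 1 ≤ lam0 * (t - Lm) := by
    rw [div_le_iff₀ hpos] at h1
    linarith
  have h3 : lam0 * t - L s ℓ lam0 ≥ lam0 * (t - Lm) := by
    have := hbound lam0 h0
    linarith [this]
  have := hKb lam0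
  linarith

theorem L_neg (b : ℝ) : L s (fun j => -ℓ j) b = L s ℓ (-b) := by
  rw [L, L, S_neg]

theorem not_bddAbove' (hs : s.Nonempty) {t : ℝ} (ht : t < s.inf' hs ℓ) :
    ¬ BddAbove (range fun lam => lam * t - L s ℓ lam) := by
  have haux : ∀ lam : ℝ, lam * (-t) - L s (fun j => -ℓ j) lam
      = (-lam) * t - L s ℓ (-lam) := by
    intro lam
    rw [L_neg]
    ring
  have h := not_bddAbove (ℓ := fun j => -ℓ j) hs (t := -t) ?_
  · intro hb
    apply h
    obtain ⟨K, hK⟩ := hb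
    refine ⟨K, ?_⟩
    rintro x ⟨lam, rfl⟩
    show lam * (-t) - L s (fun j => -ℓ j) lam ≤ K
    rw [haux lam]
    exact hK (mem_range_self (-lam))
  · rw [sup'_neg' hs ℓ]
    linarith


private def emom (T : Finset ℝ) (φ : ℝ → ℝ) (k : ℕ) (x : ℝ) : ℝ :=
  ∑ r ∈ T, φ r * r ^ k * Real.exp (r * x)

theorem hasDerivAt_emom (T : Finset ℝ) (φ : ℝ → ℝ) (k : ℕ) (x : ℝ) :
    HasDerivAt (emom T φ k) (emom T φ (k + 1) x) x := by
  have H : ∀ r ∈ T, HasDerivAt (fun y => φ r * r ^ k * Real.exp (r * y))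
      (φ r * r ^ (k + 1) * Real.exp (r * x)) x := by
    intro r _
    have hlin : HasDerivAt (fun y : ℝ => r * y) r x := by
      simpa using (hasDerivAt_id x).const_mul r
    have h := (hlin.exp).const_mul (φ r * r ^ k)
    refine h.congr_deriv ?_
    ring
  exact HasDerivAt.fun_sum H

theorem emom_zero (T : Finset ℝ) (φ : ℝ → ℝ)
    (h : ∀ x ∈ Ioo (0:ℝ) 1, ∑ r ∈ T, φ r * Real.exp (r * x) = 0) :
    ∀ k : ℕ, ∀ x ∈ Ioo (0:ℝ) 1, emom T φ k x = 0 := by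
  intro k
  induction k with
  | zero =>
    intro x hx
    simpa [emom] using h x hx
  | succ k ih =>
    intro x hx
    have hev : emom T φ k =ᶠ[𝓝 x] (fun _ => 0) := by
      filter_upwards [isOpen_Ioo.mem_nhds hx] with y hy
      exact ih y hy
    have h1 : deriv (emom T φ k) x = 0 := by
      rw [hev.deriv_eq]
      exact deriv_const x 0
    rw [← (hasDerivAt_emom T φ k x).deriv]
    exact h1

theorem expsum_eq_zero (T : Finset ℝ) (φ : ℝ → ℝ)
    (h : ∀ x ∈ Ioo (0:ℝ) 1, ∑ r ∈ T, φ r * Real.exp (r * x) = 0) :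
    ∀ r ∈ T, φ r = 0 := by
  have hhalf : (1/2 : ℝ) ∈ Ioo (0:ℝ) 1 := by norm_num
  set c : ℝ → ℝ := fun r => φ r * Real.exp (r * (1/2)) with hc
  have hmom : ∀ k : ℕ, ∑ r ∈ T, c r * r ^ k = 0 := by
    intro k
    have := emom_zero T φ h k (1/2) hhalf
    rw [emom] at this
    rw [← this]
    exact Finset.sum_congr rfl fun r _ => by rw [hc]; ring
  have hpoly : ∀ P : Polynomial ℝ, ∑ r ∈ T, c r * P.eval r = 0 := by
    intro P
    have h1 : ∀ r ∈ T, c r * P.eval r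
        = ∑ i ∈ Finset.range (P.natDegree + 1), P.coeff i * (c r * r ^ i) := by
      intro r _
      rw [Polynomial.eval_eq_sum_range, Finset.mul_sum]
      exact Finset.sum_congr rfl fun i _ => by ring
    rw [Finset.sum_congr rfl h1, Finset.sum_comm]
    refine Finset.sum_eq_zero fun i _ => ?_
    rw [← Finset.mul_sum, hmom i, mul_zero]
  intro r0 hr0
  set P : Polynomial ℝ := ∏ r ∈ T.erase r0, (Polynomial.X - Polynomial.C r) with hP
  have heval0 : ∀ r ∈ T, r ≠ r0 → P.eval r = 0 := by
    intro r hr hne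
    rw [hP, Polynomial.eval_prod]
    exact Finset.prod_eq_zero (Finset.mem_erase.mpr ⟨hne, hr⟩) (by simp)
  have hevalr0 : P.eval r0 ≠ 0 := by
    rw [hP, Polynomial.eval_prod]
    refine Finset.prod_ne_zero_iff.mpr fun r hr => ?_
    have : r ≠ r0 := (Finset.mem_erase.mp hr).1
    simp only [Polynomial.eval_sub, Polynomial.eval_X, Polynomial.eval_C]
    exact sub_ne_zero.mpr (Ne.symm this)
  have hsum : ∑ r ∈ T, c r * P.eval r = c r0 * P.eval r0 := by
    refine Finset.sum_eq_single_of_mem r0 hr0 fun r hr hne => ?_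
    rw [heval0 r hr hne, mul_zero]
  rw [hpoly P] at hsum
  have hc0 : c r0 = 0 := by
    rcases mul_eq_zero.mp hsum.symm with h' | h'
    · exact h'
    · exact absurd h' hevalr0
  rw [hc] at hc0
  rcases mul_eq_zero.mp hc0 with h' | h'
  · exact h'
  · exact absurd h' (Real.exp_ne_zero _)


theorem filter_eq_singleton {n : ℕ} (f : Fin n → ℝ)
    (hf : Function.Injective f) (i : Fin n) :
    Finset.univ.filter (fun j => f j = f i) = {i} := by
  ext j
  simp only [Finset.mem_filter, Finset.mem_univ, true_and, Finset.mem_singleton]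
  exact ⟨fun h => hf h, fun h => by rw [h]⟩

theorem range_eq_coe_image {n : ℕ} (f : Fin n → ℝ) :
    Set.range f = ↑(Finset.univ.image f) := by
  rw [Finset.coe_image, Finset.coe_univ, Set.image_univ]

theorem expsum_match {a b : ℕ} (f : Fin a → ℝ) (g : Fin b → ℝ) (A : Fin a → ℝ) (B : Fin b → ℝ)
    (hf : StrictAnti f) (hg : StrictAnti g) (hA : ∀ i, 0 < A i) (hB : ∀ j, 0 < B j)
    (h : ∀ x ∈ Ioo (0:ℝ) 1,
      ∑ i, A i * Real.exp (f i * x) = ∑ j, B j * Real.exp (g j * x)) :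
    ∃ hab : a = b, ∀ i, f i = g (Fin.cast hab i) ∧ A i = B (Fin.cast hab i) := by
  classical
  set T : Finset ℝ := (Finset.univ.image f) ∪ (Finset.univ.image g) with hT
  set φ : ℝ → ℝ := fun r =>
    (∑ i ∈ Finset.univ.filter (fun i => f i = r), A i)
      - (∑ j ∈ Finset.univ.filter (fun j => g j = r), B j) with hφ
  have hgroupA : ∀ x : ℝ, ∑ r ∈ T, (∑ i ∈ Finset.univ.filter (fun i => f i = r), A i)
      * Real.exp (r * x) = ∑ i, A i * Real.exp (f i * x) := by
    intro x
    rw [← Finset.sum_fiberwise_of_maps_to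
      (fun i _ => Finset.mem_union_left _ (Finset.mem_image_of_mem f (Finset.mem_univ i)))
      (fun i => A i * Real.exp (f i * x))]
    refine Finset.sum_congr rfl fun r hr => ?_
    rw [Finset.sum_mul]
    refine Finset.sum_congr rfl fun i hi => ?_
    rw [(Finset.mem_filter.mp hi).2]
  have hgroupB : ∀ x : ℝ, ∑ r ∈ T, (∑ j ∈ Finset.univ.filter (fun j => g j = r), B j)
      * Real.exp (r * x) = ∑ j, B j * Real.exp (g j * x) := by
    intro x
    rw [← Finset.sum_fiberwise_of_maps_to
      (fun j _ => Finset.mem_union_right _ (Finset.mem_image_of_mem g (Finset.mem_univ j)))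
      (fun j => B j * Real.exp (g j * x))]
    refine Finset.sum_congr rfl fun r hr => ?_
    rw [Finset.sum_mul]
    refine Finset.sum_congr rfl fun j hj => ?_
    rw [(Finset.mem_filter.mp hj).2]
  have hvan : ∀ r ∈ T, φ r = 0 := by
    apply expsum_eq_zero
    intro x hx
    have heq : ∑ r ∈ T, φ r * Real.exp (r * x)
        = (∑ i, A i * Real.exp (f i * x)) - (∑ j, B j * Real.exp (g j * x)) := by
      rw [← hgroupA x, ← hgroupB x, ← Finset.sum_sub_distrib]
      exact Finset.sum_congr rfl fun r _ => by rw [hφ]; ring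
    rw [heq, h x hx, sub_self]
  have hAr : ∀ i : Fin a, ∑ i' ∈ Finset.univ.filter (fun i' => f i' = f i), A i' = A i := by
    intro i
    rw [filter_eq_singleton f hf.injective i, Finset.sum_singleton]
  have hBr : ∀ j : Fin b, ∑ j' ∈ Finset.univ.filter (fun j' => g j' = g j), B j' = B j := by
    intro j
    rw [filter_eq_singleton g hg.injective j, Finset.sum_singleton]
  have hvf : ∀ i : Fin a,
      A i = ∑ j ∈ Finset.univ.filter (fun j => g j = f i), B j := by
    intro i
    have h0 := hvan (f i)
      (Finset.mem_union_left _ (Finset.mem_image_of_mem f (Finset.mem_univ i)))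
    rw [hφ] at h0
    simp only at h0
    rw [hAr i] at h0
    linarith
  have hvg : ∀ j : Fin b,
      B j = ∑ i ∈ Finset.univ.filter (fun i => f i = g j), A i := by
    intro j
    have h0 := hvan (g j)
      (Finset.mem_union_right _ (Finset.mem_image_of_mem g (Finset.mem_univ j)))
    rw [hφ] at h0
    simp only at h0
    rw [hBr j] at h0
    linarith
  have himg : Finset.univ.image f = Finset.univ.image g := by
    ext r
    simp only [Finset.mem_image, Finset.mem_univ, true_and]
    constructor
    · rintro ⟨i, rfl⟩
      by_contra hr
      have hempty : Finset.univ.filter (fun j => g j = f i) = ∅ := by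
        rw [Finset.filter_eq_empty_iff]
        intro j _
        exact fun hj => hr ⟨j, hj⟩
      have := hvf i
      rw [hempty, Finset.sum_empty] at this
      exact absurd this (hA i).ne'
    · rintro ⟨j, rfl⟩
      by_contra hr
      have hempty : Finset.univ.filter (fun i => f i = g j) = ∅ := by
        rw [Finset.filter_eq_empty_iff]
        intro i _
        exact fun hi => hr ⟨i, hi⟩
      have := hvg j
      rw [hempty, Finset.sum_empty] at this
      exact absurd this (hB j).ne'
  have hab : a = b := by
    have h1 : (Finset.univ.image f).card = a := by
      rw [Finset.card_image_of_injective _ hf.injective, Finset.card_univ, Fintype.card_fin]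
    have h2 : (Finset.univ.image g).card = b := by
      rw [Finset.card_image_of_injective _ hg.injective, Finset.card_univ, Fintype.card_fin]
    rw [← h1, ← h2, himg]
  refine ⟨hab, ?_⟩
  have hfg : ∀ i : Fin a, f i = g (Fin.cast hab i) := by
    have hfrev : StrictMono (fun i : Fin a => f i.rev) := by
      intro i j hij
      exact hf (Fin.rev_lt_rev.mpr hij)
    have hgrev : StrictMono (fun i : Fin a => g (Fin.cast hab i.rev)) := by
      intro i j hij
      apply hg
      have : j.rev < i.rev := Fin.rev_lt_rev.mpr hij
      simpa [Fin.lt_def] using this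
    have hrange : Set.range (fun i : Fin a => f i.rev)
        = Set.range (fun i : Fin a => g (Fin.cast hab i.rev)) := by
      have e1 : Set.range (fun i : Fin a => f i.rev) = Set.range f := by
        ext x
        constructor
        · rintro ⟨i, rfl⟩; exact ⟨i.rev, rfl⟩
        · rintro ⟨i, rfl⟩
          exact ⟨i.rev, by show f i.rev.rev = f i; rw [Fin.rev_rev]⟩
      have e2 : Set.range (fun i : Fin a => g (Fin.cast hab i.rev)) = Set.range g := by
        ext x
        constructor
        · rintro ⟨i, rfl⟩; exact ⟨Fin.cast hab i.rev, rfl⟩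
        · rintro ⟨j, rfl⟩
          refine ⟨(Fin.cast hab.symm j).rev, ?_⟩
          show g (Fin.cast hab ((Fin.cast hab.symm j).rev).rev) = g j
          rw [Fin.rev_rev]
          congr 1
      rw [e1, e2, range_eq_coe_image, range_eq_coe_image, himg]
    haveI : WellFoundedLT (Fin a) := inferInstance
    have := (StrictMono.range_inj hfrev hgrev).mp hrange
    intro i
    have h3 := congrFun this i.rev
    simpa [Fin.rev_rev] using h3
  intro i
  refine ⟨hfg i, ?_⟩
  have h4 := hvf i
  rw [hfg i, filter_eq_singleton g hg.injective (Fin.cast hab i), Finset.sum_singleton] at h4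
  exact h4


end BMAux

namespace BMData
open BMAux
variable (C : BMData)

/-- the log column count function -/
def lw : Fin C.m → ℝ := fun j => Real.log (C.colCount j)

theorem cols_nonempty : C.cols.Nonempty :=
  Finset.card_pos.mp (lt_trans one_pos C.one_lt_cols)

theorem colCount_pos {j : Fin C.m} (hj : j ∈ C.cols) : 0 < C.colCount j := by
  rw [cols, Finset.mem_image] at hj
  obtain ⟨p, hp, rfl⟩ := hj
  rw [colCount]
  exact Finset.card_pos.mpr ⟨p, Finset.mem_filter.mpr ⟨hp, rfl⟩⟩

theorem M_pos : (0:ℝ) < (C.M : ℝ) := by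
  have := C.cols_nonempty
  rw [M]
  exact_mod_cast Finset.card_pos.mpr this

theorem rate_eq (t : ℝ) : C.rate t = ⨆ l : ℝ, (l * t - L C.cols C.lw l) := by
  rw [rate]
  refine iSup_congr fun l => ?_
  have hsum : ∑ j ∈ C.cols, (C.colCount j : ℝ) ^ l = S C.cols C.lw l := by
    rw [S]
    refine Finset.sum_congr rfl fun j hj => ?_
    have hpos : (0:ℝ) < (C.colCount j : ℝ) := by exact_mod_cast C.colCount_pos hj
    rw [Real.rpow_def_of_pos hpos, lw, mul_comm]
  rw [hsum]
  rfl

theorem lw_ne (hnu : C.NonUniform) :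
    ∃ i ∈ C.cols, ∃ j ∈ C.cols, C.lw i ≠ C.lw j := by
  obtain ⟨i, hi, j, hj, hij⟩ := hnu
  refine ⟨i, hi, j, hj, fun h => hij ?_⟩
  have hi' : (0:ℝ) < (C.colCount i : ℝ) := by exact_mod_cast C.colCount_pos hi
  have hj' : (0:ℝ) < (C.colCount j : ℝ) := by exact_mod_cast C.colCount_pos hj
  simp only [lw] at h
  have h2 := congrArg Real.exp h
  rw [Real.exp_log hi', Real.exp_log hj'] at h2
  exact_mod_cast h2

theorem tLow_eq : C.tLow = D C.cols C.lw 0 := by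
  rw [tLow, D, S, S1, M]
  simp only [zero_mul, Real.exp_zero, mul_one, lw]
  rw [Finset.sum_const, nsmul_eq_mul, mul_one]
  ring

theorem sum_colCount : ∑ j ∈ C.cols, (C.colCount j : ℝ) = (C.N : ℝ) := by
  rw [N]
  rw [Finset.card_eq_sum_card_image Prod.fst C.A]
  push_cast
  rfl

theorem N_pos : (0:ℝ) < (C.N : ℝ) := by
  rw [N]
  exact_mod_cast Finset.card_pos.mpr C.A_nonempty

theorem tUp_eq : C.tUp = D C.cols C.lw 1 := by
  have hexp : ∀ j ∈ C.cols, Real.exp (1 * C.lw j) = (C.colCount j : ℝ) := by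
    intro j hj
    have hpos : (0:ℝ) < (C.colCount j : ℝ) := by exact_mod_cast C.colCount_pos hj
    rw [one_mul, lw, Real.exp_log hpos]
  rw [tUp, D, S, S1]
  rw [Finset.sum_congr rfl hexp, sum_colCount]
  rw [Finset.sum_congr rfl (fun j hj => by rw [hexp j hj] : ∀ j ∈ C.cols,
    C.lw j * Real.exp (1 * C.lw j) = C.lw j * (C.colCount j : ℝ))]
  rw [Finset.sum_div]
  refine Finset.sum_congr rfl fun j hj => ?_
  rw [lw]
  ring

section params
variable {C} {M0 : ℕ} {Nt R : Fin M0 → ℕ} (hp : C.HasParams M0 Nt R)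
include hp

theorem Nt_inj : Function.Injective Nt := by
  intro i j hij
  by_contra hne
  rcases lt_or_gt_of_ne hne with h | h
  · exact absurd hij (hp.1 i j h).ne'
  · exact absurd hij (hp.1 j i h).ne

theorem Nt_pos (i : Fin M0) : 0 < Nt i := by
  have hR := hp.2.1 i
  rw [hp.2.2.2 i] at hR
  obtain ⟨c, hc⟩ := Finset.card_pos.mp hR
  rw [Finset.mem_filter] at hc
  rw [← hc.2]
  exact C.colCount_pos hc.1

theorem M0_pos (hM : 0 < M0) : True := trivial

/-- grouping: `S` over columns equals the sum over distinct values. -/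
theorem S_group (x : ℝ) :
    S C.cols C.lw x = ∑ i : Fin M0, (R i : ℝ) * Real.exp (x * Real.log (Nt i)) := by
  classical
  have hM0 : 0 < M0 := by
    obtain ⟨c, hc⟩ := C.cols_nonempty
    obtain ⟨i, _⟩ := hp.2.2.1 c hc
    exact i.pos
  haveI : NeZero M0 := ⟨hM0.ne'⟩
  set κ : Fin C.m → Fin M0 := fun c =>
    if h : ∃ i, C.colCount c = Nt i then h.choose else ⟨0, hM0⟩ with hκ
  have hκspec : ∀ c ∈ C.cols, C.colCount c = Nt (κ c) := by
    intro c hc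
    have h : ∃ i, C.colCount c = Nt i := hp.2.2.1 c hc
    simp only [hκ]
    rw [dif_pos h]
    exact h.choose_spec
  have hκiff : ∀ c ∈ C.cols, ∀ i : Fin M0, (κ c = i ↔ C.colCount c = Nt i) := by
    intro c hc i
    constructor
    · intro h; rw [← h]; exact hκspec c hc
    · intro h
      exact Nt_inj hp ((hκspec c hc).symm.trans h)
  rw [S, ← Finset.sum_fiberwise_of_maps_to (fun c _ => Finset.mem_univ (κ c))
    (fun c => Real.exp (x * C.lw c))]
  refine Finset.sum_congr rfl fun i _ => ?_
  have hfilter : C.cols.filter (fun c => κ c = i) = C.cols.filter (fun c => C.colCount c = Nt i) := by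
    refine Finset.filter_congr fun c hc => ?_
    exact hκiff c hc i
  rw [hfilter]
  have hconst : ∀ c ∈ C.cols.filter (fun c => C.colCount c = Nt i),
      Real.exp (x * C.lw c) = Real.exp (x * Real.log (Nt i)) := by
    intro c hc
    rw [Finset.mem_filter] at hc
    rw [lw, hc.2]
  rw [Finset.sum_congr rfl hconst, Finset.sum_const, nsmul_eq_mul, ← hp.2.2.2 i]


end params


theorem rate_attain (hnu : C.NonUniform) {lam0 t : ℝ}
    (hD : BMAux.D C.cols C.lw lam0 = t) :
    C.rate t = lam0 * t - BMAux.L C.cols C.lw lam0 := by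
  rw [C.rate_eq]
  exact BMAux.isup_eq C.lw C.cols_nonempty (C.lw_ne hnu) hD

end BMData

end Statement8Aux

section MainProof

set_option linter.unusedSectionVars false
set_option linter.unusedVariables false
set_option maxHeartbeats 2000000

namespace BMAux

theorem rpow_base_inj {x y z : ℝ} (hx : 0 < x) (hy : 0 < y) (hz : 0 < z)
    (h : x ^ z = y ^ z) : x = y := by
  rcases lt_trichotomy x y with hlt | heq | hgt
  · exact absurd h (Real.rpow_lt_rpow hx.le hlt hz).ne
  · exact heq
  · exact absurd h.symm (Real.rpow_lt_rpow hy.le hgt hz).ne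

end BMAux

namespace BMData

theorem gamma_pos (C : BMData) : 0 < C.gamma := by
  rw [gamma]
  apply div_pos
  · apply Real.log_pos
    have : (2:ℕ) < C.n := lt_of_le_of_lt C.two_le_m C.m_lt_n
    exact_mod_cast lt_trans one_lt_two (by exact_mod_cast this)
  · apply Real.log_pos
    exact_mod_cast lt_of_lt_of_le one_lt_two C.two_le_m

/-- The backward direction : parameter conditions imply the shifted log-mgf identity. -/
theorem L_shift (C C' : BMData) (hnu : C.NonUniform)
    {M0 M0' : ℕ} {Nt R : Fin M0 → ℕ} {Nt' R' : Fin M0' → ℕ}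
    (hp : C.HasParams M0 Nt R) (hp' : C'.HasParams M0' Nt' R')
    (hab : M0 = M0')
    (hRR : ∀ i : Fin M0, (R' (Fin.cast hab i) : ℝ) / (R i : ℝ) = (C'.M:ℝ)/(C.M:ℝ))
    (hNN : ∀ i : Fin M0, (Nt i : ℝ) = (Nt' (Fin.cast hab i) : ℝ)
      * Real.exp (C.gamma * Real.log ((C'.M : ℝ) / (C.M : ℝ)))) (x : ℝ) :
    BMAux.L C'.cols C'.lw x = BMAux.L C.cols C.lw x
      - x * (C.gamma * Real.log ((C'.M : ℝ) / (C.M : ℝ))) := by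
  set cγ := C.gamma * Real.log ((C'.M : ℝ) / (C.M : ℝ)) with hcγ
  have hMpos := C.M_pos
  have hM'pos := C'.M_pos
  have hlogNt' : ∀ i : Fin M0, Real.log (Nt' (Fin.cast hab i)) = Real.log (Nt i) - cγ := by
    intro i
    have hNt'pos : (0:ℝ) < (Nt' (Fin.cast hab i) : ℝ) := by
      exact_mod_cast Nt_pos hp' (Fin.cast hab i)
    have hlog : Real.log (Nt i) = Real.log (Nt' (Fin.cast hab i)) + cγ := by
      rw [hNN i, Real.log_mul hNt'pos.ne' (Real.exp_ne_zero _), Real.log_exp]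
    linarith
  have hS' : BMAux.S C'.cols C'.lw x
      = ((C'.M:ℝ)/(C.M:ℝ)) * Real.exp (-(x * cγ)) * BMAux.S C.cols C.lw x := by
    rw [S_group hp' x, S_group hp x]
    have hreidx : ∑ j : Fin M0', (R' j : ℝ) * Real.exp (x * Real.log (Nt' j))
        = ∑ i : Fin M0, (R' (Fin.cast hab i) : ℝ)
            * Real.exp (x * Real.log (Nt' (Fin.cast hab i))) :=
      (Fintype.sum_equiv (finCongr hab)
        (fun i => (R' (Fin.cast hab i) : ℝ) * Real.exp (x * Real.log (Nt' (Fin.cast hab i))))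
        (fun j => (R' j : ℝ) * Real.exp (x * Real.log (Nt' j)))
        (fun i => by rw [finCongr_apply])).symm
    rw [hreidx, Finset.mul_sum]
    refine Finset.sum_congr rfl fun i _ => ?_
    have hRpos : (0:ℝ) < (R i : ℝ) := by exact_mod_cast hp.2.1 i
    have hR' : (R' (Fin.cast hab i) : ℝ) = ((C'.M:ℝ)/(C.M:ℝ)) * (R i : ℝ) := by
      have := hRR i
      field_simp at this ⊢
      linarith
    rw [hR', hlogNt' i]
    rw [show x * (Real.log (Nt i) - cγ) = x * Real.log (Nt i) + (-(x * cγ)) by ring,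
      Real.exp_add]
    ring
  have hLSpos := BMAux.LS_pos C.lw C.cols_nonempty x
  have harg : (1/(C'.cols.card:ℝ))
      * (((C'.M:ℝ)/(C.M:ℝ)) * Real.exp (-(x*cγ)) * BMAux.S C.cols C.lw x)
      = ((1/(C.cols.card:ℝ)) * BMAux.S C.cols C.lw x) * Real.exp (-(x*cγ)) := by
    rw [show ((C'.cols.card:ℝ)) = ((C'.M:ℝ)) from rfl,
      show ((C.cols.card:ℝ)) = ((C.M:ℝ)) from rfl]
    field_simp
  rw [BMAux.L, BMAux.L, hS', harg, Real.log_mul hLSpos.ne' (Real.exp_ne_zero _), Real.log_exp]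
  ring

end BMData

end MainProof

section MainProof2

set_option linter.unusedSectionVars false
set_option linter.unusedVariables false
set_option maxHeartbeats 2000000

namespace BMData
open BMAux

/-- Forward core: the rate-function identity on `(t̲, t̄)` forces the shifted log-mgf
identity on `(0,1)`. -/
theorem L_shift_of_rate (C C' : BMData) (hnu : C.NonUniform) (hnu' : C'.NonUniform) (cγ : ℝ)
    (H : ∀ t ∈ Set.Ioo C.tLow C.tUp, C.rate t = C'.rate (t - cγ)) :
    ∀ lam ∈ Set.Ioo (0:ℝ) 1,
      BMAux.L C.cols C.lw lam = BMAux.L C'.cols C'.lw lam + lam * cγ := by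
  have hs := C.cols_nonempty
  have hs' := C'.cols_nonempty
  have hne := C.lw_ne hnu
  have hne' := C'.lw_ne hnu'
  set s := C.cols
  set ℓ := C.lw
  set s' := C'.cols
  set ℓ' := C'.lw
  have hmono := strictMono_D ℓ hs hne
  have hmono' := strictMono_D ℓ' hs' hne'
  have hcont : ContinuousOn (D s ℓ) (Set.Icc 0 1) := (continuous_D ℓ hs).continuousOn
  -- positivity of the rate function on the open interval
  have ratepos : ∀ t ∈ Set.Ioo C.tLow C.tUp, 0 < C.rate t := by
    intro t ht
    have htmem : t ∈ Set.Ioo (D s ℓ 0) (D s ℓ 1) := by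
      rwa [← C.tLow_eq, ← C.tUp_eq]
    obtain ⟨lam, hlam, hDlam⟩ :=
      intermediate_value_Ioo (by norm_num : (0:ℝ) ≤ 1) hcont htmem
    have hatt : C.rate t = lam * t - L s ℓ lam := C.rate_attain hnu hDlam
    have hlt := L_lt ℓ hs hne hlam.1
    rw [hatt, ← hDlam]
    linarith
  -- boundedness of the primed Legendre expression on the shifted interval
  have bdd' : ∀ t ∈ Set.Ioo C.tLow C.tUp,
      BddAbove (Set.range fun l => l * (t - cγ) - L s' ℓ' l) := by
    intro t ht
    by_contra hb
    have h0 : C'.rate (t - cγ) = 0 := by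
      rw [C'.rate_eq]
      exact Real.iSup_of_not_bddAbove hb
    have := H t ht
    rw [h0] at this
    exact absurd this (ratepos t ht).ne'
  -- the shifted interval lies within the slope range of the primed log-mgf
  have hA1 : ∀ t ∈ Set.Ioo C.tLow C.tUp, t - cγ < s'.sup' hs' ℓ' := by
    intro t ht
    by_contra hge
    push_neg at hge
    set t1 := (t + C.tUp)/2 with ht1def
    have ht1 : t1 ∈ Set.Ioo C.tLow C.tUp := by
      constructor
      · have := ht.1; have := ht.2; rw [ht1def]; linarith
      · have := ht.2; rw [ht1def]; linarith
    have hgt : s'.sup' hs' ℓ' < t1 - cγ := by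
      have := ht.2; rw [ht1def]; linarith
    exact (not_bddAbove ℓ' hs' hgt) (bdd' t1 ht1)
  have hA2 : ∀ t ∈ Set.Ioo C.tLow C.tUp, s'.inf' hs' ℓ' < t - cγ := by
    intro t ht
    by_contra hge
    push_neg at hge
    set t1 := (C.tLow + t)/2 with ht1def
    have ht1 : t1 ∈ Set.Ioo C.tLow C.tUp := by
      constructor
      · have := ht.1; rw [ht1def]; linarith
      · have := ht.1; have := ht.2; rw [ht1def]; linarith
    have hlt : t1 - cγ < s'.inf' hs' ℓ' := by
      have := ht.1; rw [ht1def]; linarith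
    exact (not_bddAbove' ℓ' hs' hlt) (bdd' t1 ht1)
  -- main argument
  intro lam0 hlam0
  set t0 := D s ℓ lam0 with ht0def
  have hD0 : D s ℓ lam0 = t0 := rfl
  have htlow : C.tLow < t0 := by rw [C.tLow_eq]; exact hmono hlam0.1
  have htup : t0 < C.tUp := by rw [C.tUp_eq]; exact hmono hlam0.2
  have ht0mem : t0 ∈ Set.Ioo C.tLow C.tUp := ⟨htlow, htup⟩
  -- attainment for the primed rate function at t0 - cγ
  obtain ⟨a, ha⟩ := exists_D_lt ℓ' hs' (hA2 t0 ht0mem)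
  obtain ⟨b, hb⟩ := exists_D_gt ℓ' hs' (hA1 t0 ht0mem)
  have haltb : a < b := by
    by_contra hle
    push_neg at hle
    have := hmono'.monotone hle
    linarith
  obtain ⟨mu0, hmu0mem, hDmu0⟩ :=
    intermediate_value_Icc haltb.le ((continuous_D ℓ' hs').continuousOn) ⟨ha.le, hb.le⟩
  have hatt' : C'.rate (t0 - cγ) = mu0 * (t0 - cγ) - L s' ℓ' mu0 := C'.rate_attain hnu' hDmu0
  have hatt : C.rate t0 = lam0 * t0 - L s ℓ lam0 := C.rate_attain hnu hD0
  have hH0 := H t0 ht0mem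
  -- the two Legendre parameters agree
  have hmueq : mu0 = lam0 := by
    by_contra hne0
    rcases lt_or_gt_of_ne hne0 with hlt | hgt
    · -- mu0 < lam0 : probe at t slightly below t0
      set lam1 := (lam0 + mu0)/2 with hlam1def
      have hl1 : mu0 < lam1 := by rw [hlam1def]; linarith
      have hl2 : lam1 < lam0 := by rw [hlam1def]; linarith
      have hD1 : D s ℓ lam1 < t0 := hmono hl2
      set tb := max C.tLow (D s ℓ lam1) with htbdef
      have htb : tb < t0 := max_lt htlow hD1
      set t := (tb + t0)/2 with htdef
      have htgt : tb < t := by rw [htdef]; linarith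
      have htlt : t < t0 := by rw [htdef]; linarith
      have htmem : t ∈ Set.Ioo C.tLow C.tUp :=
        ⟨lt_of_le_of_lt (le_max_left _ _) htgt, lt_trans htlt htup⟩
      have htD : D s ℓ lam1 ≤ t := le_trans (le_trans (le_max_right _ _) htgt.le) le_rfl
      obtain ⟨lamt, hlamtmem, hDlamt⟩ :=
        intermediate_value_Icc hl2.le ((continuous_D ℓ hs).continuousOn)
          ⟨htD, htlt.le⟩
      have hattt : C.rate t = lamt * t - L s ℓ lamt := C.rate_attain hnu hDlamt
      have htang : lamt * t0 - L s ℓ lamt ≤ lam0 * t0 - L s ℓ lam0 :=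
        tangent ℓ hs hne hD0 lamt
      have hsub : mu0 * (t - cγ) - L s' ℓ' mu0 ≤ C'.rate (t - cγ) := by
        rw [C'.rate_eq]
        exact le_ciSup (bdd' t htmem) mu0
      have hHt := H t htmem
      -- rate t ≥ rate t0 + mu0 (t - t0)
      have e1 : mu0 * (t - cγ) = mu0 * (t0 - cγ) + mu0 * (t - t0) := by ring
      have key1 : C.rate t0 + mu0 * (t - t0) ≤ C.rate t := by
        rw [hH0, hatt']
        rw [hHt]
        calc mu0 * (t0 - cγ) - L s' ℓ' mu0 + mu0 * (t - t0)
            = mu0 * (t - cγ) - L s' ℓ' mu0 := by ring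
          _ ≤ C'.rate (t - cγ) := hsub
      -- rate t ≤ rate t0 + lamt (t - t0)
      have key2 : C.rate t ≤ C.rate t0 + lamt * (t - t0) := by
        rw [hattt, hatt]
        calc lamt * t - L s ℓ lamt
            = (lamt * t0 - L s ℓ lamt) + lamt * (t - t0) := by ring
          _ ≤ (lam0 * t0 - L s ℓ lam0) + lamt * (t - t0) := by linarith
      have hineq : mu0 * (t - t0) ≤ lamt * (t - t0) := by linarith
      have hlamtge : lam1 ≤ lamt := hlamtmem.1
      nlinarith [mul_pos (show (0:ℝ) < lamt - mu0 by linarith)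
        (show (0:ℝ) < t0 - t by linarith)]
    · -- lam0 < mu0 : probe at t slightly above t0
      set lam1 := (lam0 + mu0)/2 with hlam1def
      have hl1 : lam1 < mu0 := by rw [hlam1def]; linarith
      have hl2 : lam0 < lam1 := by rw [hlam1def]; linarith
      have hD1 : t0 < D s ℓ lam1 := hmono hl2
      set tb := min C.tUp (D s ℓ lam1) with htbdef
      have htb : t0 < tb := lt_min htup hD1
      set t := (t0 + tb)/2 with htdef
      have htgt : t0 < t := by rw [htdef]; linarith
      have htlt : t < tb := by rw [htdef]; linarith
      have htmem : t ∈ Set.Ioo C.tLow C.tUp :=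
        ⟨lt_trans htlow htgt, lt_of_lt_of_le htlt (min_le_left _ _)⟩
      have htD : t ≤ D s ℓ lam1 := le_trans htlt.le (min_le_right _ _)
      obtain ⟨lamt, hlamtmem, hDlamt⟩ :=
        intermediate_value_Icc hl2.le ((continuous_D ℓ hs).continuousOn)
          ⟨htgt.le, htD⟩
      have hattt : C.rate t = lamt * t - L s ℓ lamt := C.rate_attain hnu hDlamt
      have htang : lamt * t0 - L s ℓ lamt ≤ lam0 * t0 - L s ℓ lam0 :=
        tangent ℓ hs hne hD0 lamt
      have hsub : mu0 * (t - cγ) - L s' ℓ' mu0 ≤ C'.rate (t - cγ) := by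
        rw [C'.rate_eq]
        exact le_ciSup (bdd' t htmem) mu0
      have hHt := H t htmem
      have key1 : C.rate t0 + mu0 * (t - t0) ≤ C.rate t := by
        rw [hH0, hatt']
        rw [hHt]
        calc mu0 * (t0 - cγ) - L s' ℓ' mu0 + mu0 * (t - t0)
            = mu0 * (t - cγ) - L s' ℓ' mu0 := by ring
          _ ≤ C'.rate (t - cγ) := hsub
      have key2 : C.rate t ≤ C.rate t0 + lamt * (t - t0) := by
        rw [hattt, hatt]
        calc lamt * t - L s ℓ lamt
            = (lamt * t0 - L s ℓ lamt) + lamt * (t - t0) := by ring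
          _ ≤ (lam0 * t0 - L s ℓ lam0) + lamt * (t - t0) := by linarith
      have hineq : mu0 * (t - t0) ≤ lamt * (t - t0) := by linarith
      have hlamtle : lamt ≤ lam1 := hlamtmem.2
      nlinarith [mul_pos (show (0:ℝ) < mu0 - lamt by linarith)
        (show (0:ℝ) < t - t0 by linarith)]
  -- conclude the log-mgf identity at lam0
  rw [hatt, hatt', hmueq] at hH0
  linarith [hH0]

end BMData
end MainProof2

set_option linter.unusedSectionVars false
set_option linter.unusedVariables false
set_option maxHeartbeats 2000000

/-- **Theorem (rate-function characterization; same grid).** For two Bedford–McMullen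
carpets with non-uniform vertical fibres on the same grid, with parameters `(M₀, Ñ, R)`
and `(M₀', Ñ', R')` and rate functions `I`, `I'`:
`I(t) = I'(t − γ·log(M'/M))` for all `t ∈ (t̲, t̄)` iff `M₀ = M₀'` and
`Ñ_î/Ñ'_î = (R'_î/R_î)^γ = (M'/M)^γ` for every `î`. -/
theorem statement8 (C C' : BMData) (hgm : C.m = C'.m) (hgn : C.n = C'.n)
    (hnu : C.NonUniform) (hnu' : C'.NonUniform)
    (M0 M0' : ℕ) (Nt R : Fin M0 → ℕ) (Nt' R' : Fin M0' → ℕ)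
    (hp : C.HasParams M0 Nt R) (hp' : C'.HasParams M0' Nt' R') :
    (∀ t ∈ Set.Ioo C.tLow C.tUp,
        C.rate t = C'.rate (t - C.gamma * Real.log ((C'.M : ℝ) / (C.M : ℝ)))) ↔
    (∃ h : M0 = M0', ∀ i : Fin M0,
      (Nt i : ℝ) / (Nt' (Fin.cast h i) : ℝ)
          = ((R' (Fin.cast h i) : ℝ) / (R i : ℝ)) ^ C.gamma ∧
      ((R' (Fin.cast h i) : ℝ) / (R i : ℝ)) ^ C.gamma
          = ((C'.M : ℝ) / (C.M : ℝ)) ^ C.gamma) := by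
  have hMpos := C.M_pos
  have hM'pos := C'.M_pos
  have hγ := C.gamma_pos
  set cγ := C.gamma * Real.log ((C'.M : ℝ) / (C.M : ℝ)) with hcγdef
  have hexpc : Real.exp cγ = ((C'.M:ℝ)/(C.M:ℝ)) ^ C.gamma := by
    rw [Real.rpow_def_of_pos (div_pos hM'pos hMpos), hcγdef, mul_comm]
  have hNtpos : ∀ i : Fin M0, (0:ℝ) < (Nt i : ℝ) := fun i => by
    exact_mod_cast BMData.Nt_pos hp i
  have hNt'pos : ∀ j : Fin M0', (0:ℝ) < (Nt' j : ℝ) := fun j => by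
    exact_mod_cast BMData.Nt_pos hp' j
  have hRpos : ∀ i : Fin M0, (0:ℝ) < (R i : ℝ) := fun i => by exact_mod_cast hp.2.1 i
  have hR'pos : ∀ j : Fin M0', (0:ℝ) < (R' j : ℝ) := fun j => by exact_mod_cast hp'.2.1 j
  constructor
  · -- forward direction
    intro H
    have Leq := BMData.L_shift_of_rate C C' hnu hnu' cγ H
    -- the exponential-sum identity on (0,1)
    have hsum_eq : ∀ x ∈ Set.Ioo (0:ℝ) 1,
        ∑ i : Fin M0, ((R i : ℝ)/(C.M:ℝ)) * Real.exp (Real.log (Nt i) * x)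
          = ∑ j : Fin M0', ((R' j : ℝ)/(C'.M:ℝ))
              * Real.exp ((Real.log (Nt' j) + cγ) * x) := by
      intro x hx
      have hLeq := Leq x hx
      have h1 : (1/(C.M:ℝ)) * BMAux.S C.cols C.lw x = Real.exp (BMAux.L C.cols C.lw x) :=
        (Real.exp_log (BMAux.LS_pos C.lw C.cols_nonempty x)).symm
      have h2 : (1/(C'.M:ℝ)) * BMAux.S C'.cols C'.lw x
          = Real.exp (BMAux.L C'.cols C'.lw x) :=
        (Real.exp_log (BMAux.LS_pos C'.lw C'.cols_nonempty x)).symm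
      have hSS : (1/(C.M:ℝ)) * BMAux.S C.cols C.lw x
          = ((1/(C'.M:ℝ)) * BMAux.S C'.cols C'.lw x) * Real.exp (x * cγ) := by
        rw [h1, h2, hLeq, ← Real.exp_add]
      have hgroup := BMData.S_group hp x
      have hgroup' := BMData.S_group hp' x
      calc ∑ i : Fin M0, ((R i : ℝ)/(C.M:ℝ)) * Real.exp (Real.log (Nt i) * x)
          = (1/(C.M:ℝ)) * BMAux.S C.cols C.lw x := by
            rw [hgroup, Finset.mul_sum]
            refine Finset.sum_congr rfl fun i _ => ?_
            rw [mul_comm (Real.log (Nt i)) x]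
            ring
        _ = ((1/(C'.M:ℝ)) * BMAux.S C'.cols C'.lw x) * Real.exp (x * cγ) := hSS
        _ = ∑ j : Fin M0', ((R' j : ℝ)/(C'.M:ℝ)) * Real.exp ((Real.log (Nt' j) + cγ) * x) := by
            rw [hgroup', Finset.mul_sum, Finset.sum_mul]
            refine Finset.sum_congr rfl fun j _ => ?_
            rw [show (Real.log (Nt' j) + cγ) * x = x * Real.log (Nt' j) + x * cγ by ring,
              Real.exp_add]
            ring
    -- apply the matching lemma
    have hf : StrictAnti (fun i : Fin M0 => Real.log (Nt i)) := by
      intro i j hij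
      exact Real.log_lt_log (hNtpos j) (by exact_mod_cast hp.1 i j hij)
    have hg : StrictAnti (fun j : Fin M0' => Real.log (Nt' j) + cγ) := by
      intro i j hij
      have h1 := Real.log_lt_log (hNt'pos j) (show (Nt' j : ℝ) < (Nt' i : ℝ) by
        exact_mod_cast hp'.1 i j hij)
      show Real.log (Nt' j) + cγ < Real.log (Nt' i) + cγ
      linarith
    obtain ⟨hab, hmatch⟩ := BMAux.expsum_match
      (fun i : Fin M0 => Real.log (Nt i)) (fun j : Fin M0' => Real.log (Nt' j) + cγ)
      (fun i => (R i : ℝ)/(C.M:ℝ)) (fun j => (R' j : ℝ)/(C'.M:ℝ))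
      hf hg (fun i => div_pos (hRpos i) hMpos) (fun j => div_pos (hR'pos j) hM'pos)
      hsum_eq
    refine ⟨hab, fun i => ?_⟩
    obtain ⟨hfg, hAB⟩ := hmatch i
    -- R' (cast i) / R i = M'/M
    have hRR : (R' (Fin.cast hab i) : ℝ) / (R i : ℝ) = (C'.M:ℝ)/(C.M:ℝ) := by
      rw [div_eq_div_iff hMpos.ne' hM'pos.ne'] at hAB
      rw [div_eq_div_iff (hRpos i).ne' hMpos.ne']
      linear_combination -hAB
    -- Nt i / Nt' (cast i) = exp cγ
    have hNN : (Nt i : ℝ) / (Nt' (Fin.cast hab i) : ℝ) = Real.exp cγ := by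
      have : Real.log (Nt i) - Real.log (Nt' (Fin.cast hab i)) = cγ := by linarith
      rw [← Real.log_div (hNtpos i).ne' (hNt'pos _).ne'] at this
      rw [← this, Real.exp_log (div_pos (hNtpos i) (hNt'pos _))]
    constructor
    · rw [hNN, hRR, ← hexpc]
    · rw [hRR]
  · -- backward direction
    rintro ⟨hab, hcond⟩ t ht
    have hRR : ∀ i : Fin M0, (R' (Fin.cast hab i) : ℝ) / (R i : ℝ) = (C'.M:ℝ)/(C.M:ℝ) := by
      intro i
      exact BMAux.rpow_base_inj (div_pos (hR'pos _) (hRpos i)) (div_pos hM'pos hMpos) hγ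
        (hcond i).2
    have hNN : ∀ i : Fin M0, (Nt i : ℝ) = (Nt' (Fin.cast hab i) : ℝ) * Real.exp cγ := by
      intro i
      have h1 := (hcond i).1
      rw [(hcond i).2, ← hexpc] at h1
      rw [div_eq_iff (hNt'pos _).ne'] at h1
      rw [h1]
      ring
    have hLs := BMData.L_shift C C' hnu hp hp' hab hRR hNN
    rw [C.rate_eq, C'.rate_eq]
    exact (iSup_congr fun l => by rw [hLs l]; ring).symm
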